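/- Let μ be a Borel probability measure on [0,∞) with μ ≠ δ₀. For every z ∈ ℂ with 0 < Im z < π, the point −e^z lies in the lower half-plane, η_μ(−e^z) ≠ 0, and the principal argument of (−e^z)/η_μ(−e^z) lies in the interval [0, Im z). -/

import Mathlib

open MeasureTheory Filter

/-- ψ-transform of a measure on [0,∞) (viewed as a measure on ℝ). -/
noncomputable def psiR (μ : Measure ℝ) (z : ℂ) : ℂ :=
  ∫ s : ℝ, z * (s : ℂ) / (1 - z * (s : ℂ)) ∂μ

/-- η-transform of a measure on [0,∞). -/
noncomputable def etaR (μ : Measure ℝ) (z : ℂ) : ℂ :=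
  psiR μ z / (1 + psiR μ z)

section AuxStmt3
open Complex


-- Jensen: (∫ g)^2 ≤ ∫ g^2 for probability measure
lemma my_sq_integral_le {μ : Measure ℝ} [IsProbabilityMeasure μ] {g : ℝ → ℝ}
    (hg : Integrable g μ) (hg2 : Integrable (fun s => g s ^ 2) μ) :
    (∫ s, g s ∂μ) ^ 2 ≤ ∫ s, g s ^ 2 ∂μ := by
  set m := ∫ s, g s ∂μ with hm
  have h0 : 0 ≤ ∫ s, (g s - m) ^ 2 ∂μ := integral_nonneg fun s => sq_nonneg _
  have hInt1 : Integrable (fun s => g s ^ 2 - 2 * m * g s) μ := by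
    have := hg2.sub (hg.const_mul (2 * m))
    exact this
  have hexp : ∫ s, (g s - m) ^ 2 ∂μ = (∫ s, g s ^ 2 ∂μ) - m ^ 2 := by
    have hpt : (fun s => (g s - m) ^ 2) = fun s => (g s ^ 2 - 2 * m * g s) + m ^ 2 := by
      funext s; ring
    rw [hpt, integral_add hInt1 (integrable_const _),
      integral_sub hg2 (hg.const_mul (2 * m)), integral_const_mul, integral_const]
    simp [hm]
    ring
  linarith

-- arg comparison lemma
lemma my_arg_lt {u v : ℂ} (hu : u ≠ 0) (hvim : 0 < v.im) (huim : 0 ≤ u.im)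
    (h : (u / v).im < 0) : u.arg < v.arg := by
  have hv : v ≠ 0 := by intro h0; rw [h0] at hvim; simp at hvim
  have ha0 : 0 ≤ u.arg := arg_nonneg_iff.2 huim
  have hapi : u.arg ≤ Real.pi := arg_le_pi u
  have hb0 : 0 < v.arg := by
    rcases lt_or_eq_of_le (arg_nonneg_iff.2 hvim.le) with h' | h'
    · exact h'
    · exfalso; have := (arg_eq_zero_iff.1 h'.symm).2; linarith
  have hbpi : v.arg < Real.pi := arg_lt_pi_iff.2 (Or.inr (ne_of_gt hvim))
  have hns : 0 < normSq v := normSq_pos.2 hv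
  have hnum : u.im * v.re - u.re * v.im < 0 := by
    rw [div_im, div_sub_div_same] at h
    have := mul_neg_of_neg_of_pos h hns
    rwa [div_mul_cancel₀ _ (ne_of_gt hns)] at this
  have hu' : ‖u‖ * Real.sin u.arg = u.im := by
    rw [sin_arg, mul_div_cancel₀ _ (norm_ne_zero_iff.mpr hu)]
  have hu'' : ‖u‖ * Real.cos u.arg = u.re := by
    rw [cos_arg hu, mul_div_cancel₀ _ (norm_ne_zero_iff.mpr hu)]
  have hv' : ‖v‖ * Real.sin v.arg = v.im := by
    rw [sin_arg, mul_div_cancel₀ _ (norm_ne_zero_iff.mpr hv)]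
  have hv'' : ‖v‖ * Real.cos v.arg = v.re := by
    rw [cos_arg hv, mul_div_cancel₀ _ (norm_ne_zero_iff.mpr hv)]
  have habs : 0 < ‖u‖ * ‖v‖ :=
    mul_pos (norm_pos_iff.mpr hu) (norm_pos_iff.mpr hv)
  have hsin : Real.sin (u.arg - v.arg) < 0 := by
    rw [Real.sin_sub]
    by_contra hS
    push_neg at hS
    rw [← hu', ← hu'', ← hv', ← hv''] at hnum
    nlinarith [mul_nonneg habs.le hS]
  by_contra hcon
  push_neg at hcon
  have : 0 ≤ Real.sin (u.arg - v.arg) :=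
    Real.sin_nonneg_of_nonneg_of_le_pi (by linarith) (by linarith)
  linarith


lemma my_Ioi_pos {μ : Measure ℝ} [IsProbabilityMeasure μ]
    (hsupp : μ (Set.Iio 0) = 0) (hμ : μ ≠ Measure.dirac 0) :
    0 < μ (Set.Ioi 0) := by
  by_contra hcon
  push_neg at hcon
  have hIoi : μ (Set.Ioi 0) = 0 := le_antisymm (by simpa using hcon) zero_le
  have hcompl : μ ({(0 : ℝ)}ᶜ) = 0 := by
    have hsub : ({(0 : ℝ)}ᶜ : Set ℝ) ⊆ Set.Iio 0 ∪ Set.Ioi 0 := by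
      intro x hx
      rcases lt_trichotomy x 0 with h | h | h
      · exact Or.inl h
      · exact absurd h hx
      · exact Or.inr h
    refine le_antisymm ?_ zero_le
    calc μ ({(0:ℝ)}ᶜ) ≤ μ (Set.Iio 0 ∪ Set.Ioi 0) := measure_mono hsub
      _ ≤ μ (Set.Iio 0) + μ (Set.Ioi 0) := measure_union_le _ _
      _ = 0 := by rw [hsupp, hIoi, add_zero]
  apply hμ
  ext s hs
  have h1 : μ (s \ {0}) = 0 :=
    le_antisymm (le_trans (measure_mono (Set.diff_subset_compl _ _)) hcompl.le) zero_le
  have h2 : μ s = μ (s ∩ {0}) := by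
    have := measure_inter_add_diff (μ := μ) s (measurableSet_singleton 0)
    rw [h1, add_zero] at this
    exact this.symm
  rw [Measure.dirac_apply' _ hs]
  by_cases h0 : (0 : ℝ) ∈ s
  · have hsing : s ∩ {0} = {0} := by
      ext x; simp only [Set.mem_inter_iff, Set.mem_singleton_iff]
      constructor
      · exact fun h => h.2
      · rintro rfl; exact ⟨h0, rfl⟩
    have hmu0 : μ {(0:ℝ)} = 1 := by
      have huniv : μ Set.univ ≤ μ {(0:ℝ)} + μ ({(0:ℝ)}ᶜ) := by
        rw [← Set.union_compl_self ({(0:ℝ)} : Set ℝ)] at *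
        exact measure_union_le _ _
      rw [measure_univ, hcompl, add_zero] at huniv
      exact le_antisymm prob_le_one huniv
    rw [h2, hsing, hmu0, Set.indicator_of_mem h0]
    rfl
  · have hsing : s ∩ {0} = ∅ := by
      ext x; simp only [Set.mem_inter_iff, Set.mem_singleton_iff, Set.mem_empty_iff_false,
        iff_false, not_and]
      rintro hx rfl; exact h0 hx
    rw [h2, hsing, measure_empty, Set.indicator_of_notMem h0]


variable {w : ℂ}

lemma my_den_ne (hw : w.im < 0) (s : ℝ) : (1 : ℂ) - w * s ≠ 0 := by
  intro h
  have h1 : ((1 : ℂ) - w * s).im = 0 := by rw [h]; simp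
  have h2 : ((1 : ℂ) - w * s).im = -(w.im * s) := by simp [Complex.sub_im, Complex.mul_im]
  have hs : s = 0 := by
    rw [h2] at h1
    rcases mul_eq_zero.1 (neg_eq_zero.1 h1) with h' | h'
    · exact absurd h' (ne_of_lt hw)
    · exact h'
  rw [hs] at h
  simp at h

lemma my_im_f (s : ℝ) :
    (w * s / (1 - w * s)).im = w.im * s / normSq (1 - w * s) := by
  rw [div_im]
  simp only [Complex.mul_im, Complex.mul_re, Complex.sub_re, Complex.sub_im, Complex.one_re,
    Complex.one_im, Complex.ofReal_re, Complex.ofReal_im]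
  ring

lemma my_normSq_f (s : ℝ) :
    normSq (w * s / (1 - w * s)) = normSq w * s ^ 2 / normSq (1 - w * s) := by
  rw [normSq_div, normSq_mul, normSq_ofReal]
  ring

lemma my_wconj_f (s : ℝ) :
    (w * (starRingEnd ℂ) (w * s / (1 - w * s))).im
      = -w.im * normSq (w * s / (1 - w * s)) := by
  have h1 : w * (starRingEnd ℂ) (w * s / (1 - w * s))
      = ((normSq w * s : ℝ) : ℂ) / (starRingEnd ℂ) (1 - w * s) := by
    rw [map_div₀, map_mul, conj_ofReal, ← mul_div_assoc, ← mul_assoc, mul_conj]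
    push_cast; ring
  rw [h1, my_normSq_f, div_im]
  simp only [normSq_conj, Complex.conj_im, Complex.conj_re, Complex.sub_im, Complex.sub_re,
    Complex.mul_im, Complex.mul_re, Complex.one_im, Complex.one_re, Complex.ofReal_re,
    Complex.ofReal_im]
  ring

lemma my_abs_f_le (hw : w.im < 0) {s : ℝ} (hs : 0 ≤ s) :
    ‖w * s / (1 - w * s)‖ ≤ ‖w‖ / (-w.im) := by
  rcases eq_or_lt_of_le hs with h0 | h0
  · rw [← h0]
    simp
    exact div_nonneg (norm_nonneg _) (by linarith)
  · have him : ((1 : ℂ) - w * s).im = -(w.im * s) := by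
      simp [Complex.sub_im, Complex.mul_im]
    have hq : (-w.im) * s ≤ ‖1 - w * s‖ := by
      calc (-w.im) * s = ((1 : ℂ) - w * s).im := by rw [him]; ring
        _ ≤ |((1 : ℂ) - w * s).im| := le_abs_self _
        _ ≤ ‖1 - w * s‖ := Complex.abs_im_le_norm _
    have hpos : 0 < (-w.im) * s := mul_pos (neg_pos.2 hw) h0
    rw [norm_div, norm_mul, Complex.norm_real, Real.norm_of_nonneg hs]
    calc ‖w‖ * s / ‖1 - w * s‖
        ≤ ‖w‖ * s / ((-w.im) * s) :=
          div_le_div_of_nonneg_left (by positivity) hpos hq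
      _ = ‖w‖ / (-w.im) := by
          rw [mul_comm (-w.im) s, ← div_div, mul_div_assoc, div_self (ne_of_gt h0), mul_one]

section main
variable {μ : Measure ℝ} [IsProbabilityMeasure μ] {w : ℂ}

lemma my_cont (hw : w.im < 0) : Continuous (fun s : ℝ => w * s / (1 - w * s)) := by
  apply Continuous.div
  · exact continuous_const.mul Complex.continuous_ofReal
  · exact continuous_const.sub (continuous_const.mul Complex.continuous_ofReal)
  · exact fun s => my_den_ne hw s

lemma my_ae_nonneg (hsupp : μ (Set.Iio 0) = 0) : ∀ᵐ s ∂μ, (0 : ℝ) ≤ s := by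
  rw [ae_iff]
  convert hsupp using 2
  ext x
  simp [not_le, Set.mem_Iio]

lemma my_integrable (hw : w.im < 0) (hsupp : μ (Set.Iio 0) = 0) :
    Integrable (fun s : ℝ => w * s / (1 - w * s)) μ := by
  apply Integrable.mono' (integrable_const (‖w‖ / (-w.im)))
    (my_cont hw).aestronglyMeasurable
  filter_upwards [my_ae_nonneg hsupp] with s hs
  exact my_abs_f_le hw hs

lemma my_integrable_abs (hw : w.im < 0) (hsupp : μ (Set.Iio 0) = 0) :
    Integrable (fun s : ℝ => ‖w * s / (1 - w * s)‖) μ :=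
  (my_integrable hw hsupp).norm

lemma my_integrable_sq (hw : w.im < 0) (hsupp : μ (Set.Iio 0) = 0) :
    Integrable (fun s : ℝ => ‖w * s / (1 - w * s)‖ ^ 2) μ := by
  apply Integrable.mono' (integrable_const ((‖w‖ / (-w.im)) ^ 2))
    (((continuous_norm.comp (my_cont hw)).pow 2)).aestronglyMeasurable
  filter_upwards [my_ae_nonneg hsupp] with s hs
  rw [Real.norm_eq_abs, _root_.abs_of_nonneg (sq_nonneg _)]
  exact pow_le_pow_left₀ (norm_nonneg _) (my_abs_f_le hw hs) 2

lemma my_psi_im_neg (hw : w.im < 0) (hsupp : μ (Set.Iio 0) = 0)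
    (hμ : μ ≠ Measure.dirac 0) : (psiR μ w).im < 0 := by
  have hint := my_integrable (μ := μ) hw hsupp
  have him : (psiR μ w).im = ∫ s, (w * s / (1 - w * s)).im ∂μ := by
    rw [psiR]
    simpa only [RCLike.im_eq_complex_im] using (integral_im hint).symm
  rw [him]
  have hle : ∀ᵐ (s : ℝ) ∂μ, (w * s / (1 - w * s)).im ≤ 0 := by
    filter_upwards [my_ae_nonneg hsupp] with s hs
    rw [my_im_f]
    apply div_nonpos_of_nonpos_of_nonneg
    · exact mul_nonpos_of_nonpos_of_nonneg hw.le hs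
    · exact normSq_nonneg _
  have hint_im : Integrable (fun s : ℝ => (w * s / (1 - w * s)).im) μ := hint.im
  rcases lt_or_eq_of_le (integral_nonpos_of_ae hle) with h | h
  · exact h
  · exfalso
    have hzero : ∀ᵐ (s : ℝ) ∂μ, -(w * s / (1 - w * s)).im = 0 := by
      have := (integral_eq_zero_iff_of_nonneg_ae (f := fun s : ℝ => -(w * s / (1 - w * s)).im)
        (by filter_upwards [hle] with s hs; simpa using hs) hint_im.neg).1
        (by simp only [integral_neg, h, neg_zero])
      filter_upwards [this] with s hs using hs
    have hsub : Set.Ioi (0:ℝ) ⊆ {s : ℝ | ¬ -(w * s / (1 - w * s)).im = 0} := by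
      intro s hs
      simp only [Set.mem_setOf_eq, neg_eq_zero]
      rw [my_im_f]
      apply div_ne_zero
      · exact mul_ne_zero (ne_of_lt hw) (ne_of_gt hs)
      · exact (normSq_pos.2 (my_den_ne hw s)).ne'
    have hlt := (my_Ioi_pos hsupp hμ).trans_le (measure_mono hsub)
    rw [ae_iff] at hzero
    rw [hzero] at hlt
    exact lt_irrefl _ hlt

lemma my_key (hw : w.im < 0) (hsupp : μ (Set.Iio 0) = 0) :
    0 ≤ (w * (1 + psiR μ w) * (starRingEnd ℂ) (psiR μ w)).im := by
  set A := psiR μ w with hA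
  have hint := my_integrable (μ := μ) hw hsupp
  -- Im (w * conj A) = -w.im * ∫ normSq f
  have h1 : (w * (starRingEnd ℂ) A).im
      = -w.im * ∫ s, ‖w * s / (1 - w * s)‖ ^ 2 ∂μ := by
    have hre : A.re = ∫ s, (w * s / (1 - w * s)).re ∂μ := by rw [hA, psiR]; simpa only [RCLike.re_eq_complex_re] using (integral_re hint).symm
    have him : A.im = ∫ s, (w * s / (1 - w * s)).im ∂μ := by rw [hA, psiR]; simpa only [RCLike.im_eq_complex_im] using (integral_im hint).symm
    have hire : Integrable (fun s : ℝ => (w * s / (1 - w * s)).re) μ := hint.re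
    have hiim : Integrable (fun s : ℝ => (w * s / (1 - w * s)).im) μ := hint.im
    have : (w * (starRingEnd ℂ) A).im = w.im * A.re - w.re * A.im := by
      simp [Complex.mul_im, Complex.conj_re, Complex.conj_im]; ring
    rw [this, hre, him, ← integral_const_mul, ← integral_const_mul, ← integral_sub
      (hire.const_mul _) (hiim.const_mul _), ← integral_const_mul]
    congr 1
    funext s
    have hgen : ∀ ζ : ℂ, (w * (starRingEnd ℂ) ζ).im = w.im * ζ.re - w.re * ζ.im := by
      intro ζ
      simp only [Complex.mul_im, Complex.conj_re, Complex.conj_im]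
      ring
    rw [← hgen (w * s / (1 - w * s)), my_wconj_f, Complex.sq_norm]
  have h2 : normSq A ≤ ∫ s, ‖w * s / (1 - w * s)‖ ^ 2 ∂μ := by
    have habsA : ‖A‖ ≤ ∫ s, ‖w * s / (1 - w * s)‖ ∂μ := by
      rw [hA, psiR]
      calc ‖∫ s, w * s / (1 - w * s) ∂μ‖ = ‖∫ s, w * s / (1 - w * s) ∂μ‖ := rfl
        _ ≤ ∫ s, ‖w * s / (1 - w * s)‖ ∂μ := norm_integral_le_integral_norm _
        _ = ∫ s, ‖w * s / (1 - w * s)‖ ∂μ := rfl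
    calc normSq A = ‖A‖ ^ 2 := (Complex.sq_norm A).symm
      _ ≤ (∫ s, ‖w * s / (1 - w * s)‖ ∂μ) ^ 2 :=
          pow_le_pow_left₀ (norm_nonneg _) habsA 2
      _ ≤ ∫ s, ‖w * s / (1 - w * s)‖ ^ 2 ∂μ :=
          my_sq_integral_le (my_integrable_abs hw hsupp) (my_integrable_sq hw hsupp)
  have hexpand : (w * (1 + A) * (starRingEnd ℂ) A).im
      = (w * (starRingEnd ℂ) A).im + w.im * normSq A := by
    have : w * (1 + A) * (starRingEnd ℂ) A
        = w * (starRingEnd ℂ) A + (normSq A : ℝ) * w := by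
      rw [mul_add, mul_one, add_mul]
      rw [mul_assoc, Complex.mul_conj]
      ring
    rw [this]
    simp only [Complex.add_im, Complex.mul_im, Complex.ofReal_re, Complex.ofReal_im]
    ring
  rw [hexpand, h1]
  nlinarith [h2]

end main

end AuxStmt3

open Complex in
theorem stmt3 (μ : Measure ℝ) [IsProbabilityMeasure μ]
    (hsupp : μ (Set.Iio 0) = 0) (hμ : μ ≠ Measure.dirac 0)
    (z : ℂ) (h1 : 0 < z.im) (h2 : z.im < Real.pi) :
    (-Complex.exp z).im < 0 ∧ etaR μ (-Complex.exp z) ≠ 0 ∧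
      ((-Complex.exp z) / etaR μ (-Complex.exp z)).arg ∈ Set.Ico 0 z.im := by
  set w : ℂ := -Complex.exp z with hwdef
  have hexpim : 0 < (Complex.exp z).im := by
    rw [Complex.exp_im]
    exact mul_pos (Real.exp_pos _) (Real.sin_pos_of_pos_of_lt_pi h1 h2)
  have hw : w.im < 0 := by
    rw [hwdef, Complex.neg_im]
    linarith
  have hw0 : w ≠ 0 := by
    intro h; rw [h] at hw; simp at hw
  set A : ℂ := psiR μ w with hA
  have hAim : A.im < 0 := my_psi_im_neg hw hsupp hμ
  have hA0 : A ≠ 0 := by intro h; rw [h] at hAim; simp at hAim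
  have hB0 : (1 : ℂ) + A ≠ 0 := by
    intro h
    have : ((1 : ℂ) + A).im = A.im := by simp
    rw [h] at this
    simp at this
    linarith
  have heta0 : etaR μ w ≠ 0 := by
    rw [etaR, ← hA]
    exact div_ne_zero hA0 hB0
  have hdiv : ∀ x : ℂ, (x / A).im = (x * (starRingEnd ℂ) A).im / normSq A := by
    intro x
    rw [div_im, Complex.mul_im, Complex.conj_re, Complex.conj_im]
    ring
  have hu_eq : w / etaR μ w = w * (1 + A) / A := by
    rw [etaR, ← hA, div_div_eq_mul_div]
  have huim : 0 ≤ (w / etaR μ w).im := by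
    rw [hu_eq, hdiv]
    exact div_nonneg (my_key hw hsupp) (normSq_nonneg _)
  have hu0 : w / etaR μ w ≠ 0 := div_ne_zero hw0 heta0
  -- Im ((1+A)/A) > 0
  have hfrac : 0 < ((1 + A) / A).im := by
    rw [hdiv]
    apply div_pos
    · have : ((1 + A) * (starRingEnd ℂ) A).im = -A.im := by
        rw [add_mul, one_mul, Complex.mul_conj]
        simp
      rw [this]
      linarith
    · exact normSq_pos.2 hA0
  have hquot : ((w / etaR μ w) / (-w)).im < 0 := by
    have heq : (w / etaR μ w) / (-w) = -((1 + A) / A) := by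
      rw [hu_eq]
      field_simp
    rw [heq, Complex.neg_im]
    linarith
  have hargexp : (Complex.exp z).arg = z.im := by
    rw [Complex.exp_eq_exp_re_mul_sin_add_cos, ← Complex.ofReal_exp,
      Complex.arg_mul_cos_add_sin_mul_I (Real.exp_pos _)
        ⟨by linarith [Real.pi_pos], h2.le⟩]
  have hnegw : -w = Complex.exp z := by rw [hwdef, neg_neg]
  have hargw : (-w).arg = z.im := by rw [hnegw, hargexp]
  have hlt : (w / etaR μ w).arg < z.im := by
    rw [← hargw]
    apply my_arg_lt hu0 _ huim hquot
    rw [hnegw]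
    exact hexpim
  exact ⟨hw, heta0, ⟨Complex.arg_nonneg_iff.2 huim, hlt⟩⟩
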